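/- Let k be a field, G a group, J ⊆ kG a nilpotent Hopf ideal of the group algebra kG, and V a Yetter–Drinfeld module over kG with braiding c. Then the family (J^iV)_{i≥0} is a decreasing filtration of the braided vector space (V, c): J^0V = V, J^iV ⊇ J^jV for i ≤ j, ∩_{i≥0} J^iV = 0, and c(J^iV ⊗ J^jV) ⊆ Σ_{k+l ≥ i+j} J^kV ⊗ J^lV for all i, j ≥ 0. -/

import Mathlib

open TensorProduct

/-- The image `P ⊗ Q` of a tensor product of two submodules inside `M ⊗[k] N`. -/
noncomputable def subTensor15 {k : Type*} [CommSemiring k] {M N : Type*}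
    [AddCommMonoid M] [Module k M] [AddCommMonoid N] [Module k N]
    (P : Submodule k M) (Q : Submodule k N) : Submodule k (M ⊗[k] N) :=
  LinearMap.range (TensorProduct.map P.subtype Q.subtype)

/-- The subspace `N V` of a module `V` spanned by products `a • v` with `a` in a subspace `N`
of the acting algebra. -/
def subSMul15 {k : Type*} [CommSemiring k] {A : Type*} [Semiring A] [Algebra k A]
    {V : Type*} [AddCommMonoid V] [Module k V] [Module A V] [IsScalarTower k A V]
    (N : Submodule k A) : Submodule k V :=
  Submodule.span k {w : V | ∃ a ∈ N, ∃ v : V, w = a • v}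

noncomputable section Aux15

theorem tmul_mem15 {R M N : Type*} [CommSemiring R] [AddCommMonoid M] [Module R M]
    [AddCommMonoid N] [Module R N] {P : Submodule R M} {Q : Submodule R N} {u : M} {v : N}
    (hu : u ∈ P) (hv : v ∈ Q) : u ⊗ₜ[R] v ∈ subTensor15 P Q :=
  ⟨(⟨u, hu⟩ : P) ⊗ₜ[R] (⟨v, hv⟩ : Q), rfl⟩

theorem st_ind15 {R M N X : Type*} [CommSemiring R] [AddCommMonoid M] [Module R M]
    [AddCommMonoid N] [Module R N] [AddCommMonoid X] [Module R X]
    {P : Submodule R M} {Q : Submodule R N} (f : M ⊗[R] N →ₗ[R] X) {W : Submodule R X}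
    {t : M ⊗[R] N} (ht : t ∈ subTensor15 P Q)
    (hf : ∀ u ∈ P, ∀ v ∈ Q, f (u ⊗ₜ[R] v) ∈ W) : f t ∈ W := by
  obtain ⟨s, rfl⟩ := ht
  induction s using TensorProduct.induction_on with
  | zero => rw [map_zero, map_zero]; exact W.zero_mem
  | tmul u v => rw [TensorProduct.map_tmul]; exact hf _ u.2 _ v.2
  | add a b ha hb => rw [map_add, map_add]; exact W.add_mem ha hb

theorem st_top15 {R M N : Type*} [CommSemiring R] [AddCommMonoid M] [Module R M]
    [AddCommMonoid N] [Module R N] (t : M ⊗[R] N) :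
    t ∈ subTensor15 (⊤ : Submodule R M) (⊤ : Submodule R N) := by
  induction t using TensorProduct.induction_on with
  | zero => exact Submodule.zero_mem _
  | tmul u v => exact tmul_mem15 trivial trivial
  | add a b ha hb => exact Submodule.add_mem _ ha hb

variable {k : Type*} [Field k] {G : Type*} [Group G]

/-- `K 0 = ⊤`, `K i = J^i` for `i ≥ 1`. -/
def Kpow15 (J : Submodule k (MonoidAlgebra k G)) (i : ℕ) : Submodule k (MonoidAlgebra k G) :=
  if i = 0 then ⊤ else J ^ i

variable (J : Submodule k (MonoidAlgebra k G))

theorem Kpow15_zero : Kpow15 J 0 = ⊤ := if_pos rfl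

theorem Kpow15_succ (m : ℕ) : Kpow15 J (m + 1) = J ^ (m + 1) := if_neg (Nat.succ_ne_zero m)

theorem Kpow15_one : Kpow15 J 1 = J := by simp [Kpow15]

theorem pow_le_K15 (i : ℕ) : J ^ i ≤ Kpow15 J i := by
  cases i with
  | zero => exact le_top
  | succ m => rw [Kpow15_succ]

variable {J}
variable (hJ2 : ∀ x ∈ J, ∀ a : MonoidAlgebra k G, a * x ∈ J ∧ x * a ∈ J)

include hJ2 in
theorem leftmul15 : ∀ m : ℕ, ∀ x ∈ J ^ (m + 1), ∀ a : MonoidAlgebra k G, a * x ∈ J ^ (m + 1) := by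
  intro m
  induction m with
  | zero =>
    intro x hx a
    rw [pow_one] at hx ⊢
    exact (hJ2 x hx a).1
  | succ m ih =>
    intro x hx a
    rw [pow_succ] at hx ⊢
    refine Submodule.mul_induction_on hx (fun y hy z hz => ?_) (fun u v hu hv => ?_)
    · rw [← mul_assoc]
      exact Submodule.mul_mem_mul (ih y hy a) hz
    · rw [mul_add]
      exact Submodule.add_mem _ hu hv

include hJ2 in
theorem rightmul15 : ∀ m : ℕ, ∀ x ∈ J ^ (m + 1), ∀ a : MonoidAlgebra k G, x * a ∈ J ^ (m + 1) := by
  intro m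
  induction m with
  | zero =>
    intro x hx a
    rw [pow_one] at hx ⊢
    exact (hJ2 x hx a).2
  | succ m ih =>
    intro x hx a
    rw [pow_succ] at hx ⊢
    refine Submodule.mul_induction_on hx (fun y hy z hz => ?_) (fun u v hu hv => ?_)
    · rw [mul_assoc]
      have hz' : z * a ∈ J := (hJ2 z hz a).2
      exact Submodule.mul_mem_mul hy hz'
    · rw [add_mul]
      exact Submodule.add_mem _ hu hv

include hJ2 in
theorem KmulK15 : ∀ p q : ℕ, ∀ a ∈ Kpow15 J p, ∀ b ∈ Kpow15 J q,
    a * b ∈ Kpow15 J (p + q) := by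
  intro p q
  match p, q with
  | 0, 0 => intro a _ b _; exact Submodule.mem_top
  | 0, (q+1) =>
    intro a _ b hb
    rw [Kpow15_succ] at hb
    have : a * b ∈ J ^ (q + 1) := leftmul15 hJ2 q b hb a
    have hq : 0 + (q + 1) = q + 1 := by omega
    rw [hq, Kpow15_succ]
    exact this
  | (p+1), 0 =>
    intro a ha b _
    rw [Kpow15_succ] at ha
    rw [Kpow15_succ]
    exact rightmul15 hJ2 p a ha b
  | (p+1), (q+1) =>
    intro a ha b hb
    rw [Kpow15_succ] at ha hb
    refine pow_le_K15 J _ ?_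
    rw [pow_add]
    exact Submodule.mul_mem_mul ha hb

theorem Smul15 (S : MonoidAlgebra k G →ₗ[k] MonoidAlgebra k G)
    (hS : ∀ g : G, S (MonoidAlgebra.of k G g) = MonoidAlgebra.of k G g⁻¹) :
    ∀ a b : MonoidAlgebra k G, S (a * b) = S b * S a := by
  intro a
  induction a using MonoidAlgebra.induction_on with
  | of g =>
    intro b
    induction b using MonoidAlgebra.induction_on with
    | of h => rw [← map_mul (MonoidAlgebra.of k G), hS, hS, hS, mul_inv_rev, map_mul]
    | add f f' hf hf' => rw [mul_add, map_add, hf, hf', map_add, add_mul]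
    | smul r f hf => rw [mul_smul_comm, map_smul, hf, map_smul, smul_mul_assoc]
  | add f f' hf hf' => intro b; rw [add_mul, map_add, hf b, hf' b, map_add, mul_add]
  | smul r f hf => intro b; rw [smul_mul_assoc, map_smul, hf b, map_smul, mul_smul_comm]

theorem Dmul15 (Δ : MonoidAlgebra k G →ₗ[k] MonoidAlgebra k G ⊗[k] MonoidAlgebra k G)
    (hΔ : ∀ g : G, Δ (MonoidAlgebra.of k G g) =
      MonoidAlgebra.of k G g ⊗ₜ[k] MonoidAlgebra.of k G g) :
    ∀ a b : MonoidAlgebra k G, Δ (a * b) = Δ a * Δ b := by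
  intro a
  induction a using MonoidAlgebra.induction_on with
  | of g =>
    intro b
    induction b using MonoidAlgebra.induction_on with
    | of h =>
      rw [← map_mul (MonoidAlgebra.of k G), hΔ, hΔ, hΔ, Algebra.TensorProduct.tmul_mul_tmul,
        ← map_mul]
    | add f f' hf hf' => rw [mul_add, map_add, hf, hf', map_add, mul_add]
    | smul r f hf => rw [mul_smul_comm, map_smul, hf, map_smul, mul_smul_comm]
  | add f f' hf hf' => intro b; rw [add_mul, map_add, hf b, hf' b, map_add, add_mul]
  | smul r f hf => intro b; rw [smul_mul_assoc, map_smul, hf b, map_smul, smul_mul_assoc]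

theorem SmemK15 (S : MonoidAlgebra k G →ₗ[k] MonoidAlgebra k G)
    (hS : ∀ g : G, S (MonoidAlgebra.of k G g) = MonoidAlgebra.of k G g⁻¹)
    (hJS : ∀ x ∈ J, S x ∈ J) :
    ∀ q : ℕ, ∀ a ∈ Kpow15 J q, S a ∈ Kpow15 J q := by
  intro q
  match q with
  | 0 => intro a _; exact Submodule.mem_top
  | (m+1) =>
    rw [Kpow15_succ]
    induction m with
    | zero =>
      intro a ha
      rw [pow_one] at ha ⊢
      exact hJS a ha
    | succ m ih =>
      intro a ha
      rw [pow_succ] at ha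
      refine Submodule.mul_induction_on ha (fun y hy z hz => ?_) (fun u v hu hv => ?_)
      · rw [Smul15 S hS y z, pow_succ']
        exact Submodule.mul_mem_mul (hJS z hz) (ih y hy)
      · rw [map_add]
        exact Submodule.add_mem _ hu hv

/-- `D i = Σ_{p+q=i} K p ⊗ K q`. -/
def D15 (J : Submodule k (MonoidAlgebra k G)) (i : ℕ) :
    Submodule k (MonoidAlgebra k G ⊗[k] MonoidAlgebra k G) :=
  ⨆ pq : {pq : ℕ × ℕ // pq.1 + pq.2 = i},
    subTensor15 (Kpow15 J pq.1.1) (Kpow15 J pq.1.2)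

theorem memD15 {i : ℕ} (p q : ℕ) (hpq : p + q = i) {t : MonoidAlgebra k G ⊗[k] MonoidAlgebra k G}
    (ht : t ∈ subTensor15 (Kpow15 J p) (Kpow15 J q)) : t ∈ D15 J i :=
  Submodule.mem_iSup_of_mem ⟨(p, q), hpq⟩ ht

include hJ2 in
theorem DmulD15 {p q : ℕ} {a b : MonoidAlgebra k G ⊗[k] MonoidAlgebra k G}
    (ha : a ∈ D15 J p) (hb : b ∈ D15 J q) : a * b ∈ D15 J (p + q) := by
  refine Submodule.iSup_induction _ (motive := fun a => a * b ∈ D15 J (p + q)) ha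
    (fun pq x hx => ?_) (by simp only [zero_mul]; exact Submodule.zero_mem _)
    (fun u v hu hv => by simp only [add_mul]; exact Submodule.add_mem _ hu hv)
  obtain ⟨⟨p1, p2⟩, hp⟩ := pq
  refine Submodule.iSup_induction _ (motive := fun b => x * b ∈ D15 J (p + q)) hb
    (fun qr y hy => ?_) (by simp only [mul_zero]; exact Submodule.zero_mem _)
    (fun u v hu hv => by simp only [mul_add]; exact Submodule.add_mem _ hu hv)
  obtain ⟨⟨q1, q2⟩, hq⟩ := qr
  refine memD15 (p1 + q1) (p2 + q2) (by omega) ?_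
  have : (LinearMap.mulRight k y) x ∈
      subTensor15 (Kpow15 J (p1 + q1)) (Kpow15 J (p2 + q2)) := by
    refine st_ind15 _ hx (fun u hu w hw => ?_)
    have : (LinearMap.mulLeft k (u ⊗ₜ[k] w)) y ∈
        subTensor15 (Kpow15 J (p1 + q1)) (Kpow15 J (p2 + q2)) := by
      refine st_ind15 _ hy (fun s hs t ht => ?_)
      rw [LinearMap.mulLeft_apply, Algebra.TensorProduct.tmul_mul_tmul]
      exact tmul_mem15 (KmulK15 hJ2 p1 q1 u hu s hs) (KmulK15 hJ2 p2 q2 w hw t ht)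
    rwa [LinearMap.mulLeft_apply] at this
  rwa [LinearMap.mulRight_apply] at this

include hJ2 in
theorem DmemD15 (Δ : MonoidAlgebra k G →ₗ[k] MonoidAlgebra k G ⊗[k] MonoidAlgebra k G)
    (hΔ : ∀ g : G, Δ (MonoidAlgebra.of k G g) =
      MonoidAlgebra.of k G g ⊗ₜ[k] MonoidAlgebra.of k G g)
    (hJΔ : ∀ x ∈ J, Δ x ∈ subTensor15 J ⊤ ⊔ subTensor15 ⊤ J) :
    ∀ i : ℕ, ∀ x ∈ Kpow15 J i, Δ x ∈ D15 J i := by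
  have h1 : ∀ x ∈ J, Δ x ∈ D15 J 1 := by
    intro x hx
    obtain ⟨y, hy, z, hz, hyz⟩ := Submodule.mem_sup.mp (hJΔ x hx)
    rw [← hyz]
    refine Submodule.add_mem _ ?_ ?_
    · refine memD15 1 0 rfl ?_
      rwa [Kpow15_one, Kpow15_zero]
    · refine memD15 0 1 rfl ?_
      rwa [Kpow15_one, Kpow15_zero]
  intro i
  induction i with
  | zero => intro x _; exact memD15 0 0 rfl (by rw [Kpow15_zero]; exact st_top15 (Δ x))
  | succ m ih =>
    cases m with
    | zero =>
      intro x hx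
      rw [Kpow15_one] at hx
      exact h1 x hx
    | succ m' =>
      intro x hx
      rw [Kpow15_succ, pow_succ] at hx
      refine Submodule.mul_induction_on hx (fun y hy z hz => ?_) (fun u v hu hv => ?_)
      · rw [Dmul15 Δ hΔ y z]
        have hy' : Δ y ∈ D15 J (m' + 1) := ih y (by rw [Kpow15_succ]; exact hy)
        exact DmulD15 hJ2 hy' (h1 z hz)
      · rw [map_add]
        exact Submodule.add_mem _ hu hv

/-- Triple-tensor analogue of `D15`. -/
def D3_15 (J : Submodule k (MonoidAlgebra k G)) (i : ℕ) :
    Submodule k ((MonoidAlgebra k G ⊗[k] MonoidAlgebra k G) ⊗[k] MonoidAlgebra k G) :=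
  ⨆ t : {t : (ℕ × ℕ) × ℕ // t.1.1 + t.1.2 + t.2 = i},
    subTensor15 (subTensor15 (Kpow15 J t.1.1.1) (Kpow15 J t.1.1.2)) (Kpow15 J t.1.2)

theorem memD3_15 {i : ℕ} (p q r : ℕ) (hpq : p + q + r = i)
    {t : (MonoidAlgebra k G ⊗[k] MonoidAlgebra k G) ⊗[k] MonoidAlgebra k G}
    (ht : t ∈ subTensor15 (subTensor15 (Kpow15 J p) (Kpow15 J q)) (Kpow15 J r)) :
    t ∈ D3_15 J i :=
  Submodule.mem_iSup_of_mem ⟨((p, q), r), hpq⟩ ht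

section ModuleV

variable {V : Type*} [AddCommGroup V] [Module k V] [Module (MonoidAlgebra k G) V]
  [IsScalarTower k (MonoidAlgebra k G) V]

theorem hsmul_comm15 (a : MonoidAlgebra k G) (r : k) (x : V) :
    a • (r • x) = r • (a • x) := by
  rw [← algebraMap_smul (MonoidAlgebra k G) r x, ← mul_smul, ← Algebra.commutes r a, mul_smul,
    algebraMap_smul]

/-- `a ↦ a • v` as a `k`-linear map. -/
def smulBy15 (v : V) : MonoidAlgebra k G →ₗ[k] V where
  toFun a := a • v
  map_add' a b := add_smul a b v
  map_smul' r a := by simp [smul_assoc]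

@[simp] theorem smulBy15_apply (v : V) (a : MonoidAlgebra k G) : smulBy15 v a = a • v := rfl

theorem F0top15 : subSMul15 (V := V) (J ^ 0) = ⊤ := by
  rw [eq_top_iff]
  intro v _
  refine Submodule.subset_span ⟨1, ?_, v, (one_smul (MonoidAlgebra k G) v).symm⟩
  rw [pow_zero, Submodule.one_eq_span]
  exact Submodule.subset_span rfl

theorem Ksmul15 {m : ℕ} {a : MonoidAlgebra k G} (ha : a ∈ Kpow15 J m) (v : V) :
    a • v ∈ subSMul15 (V := V) (J ^ m) := by
  cases m with
  | zero => rw [F0top15]; trivial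
  | succ m' =>
    rw [Kpow15_succ] at ha
    exact Submodule.subset_span ⟨a, ha, v, rfl⟩

include hJ2 in
theorem smulF15 {p q : ℕ} {a : MonoidAlgebra k G} (ha : a ∈ Kpow15 J p) {v : V}
    (hv : v ∈ subSMul15 (V := V) (J ^ q)) :
    a • v ∈ subSMul15 (V := V) (J ^ (p + q)) := by
  refine Submodule.span_induction (p := fun x _ => a • x ∈ subSMul15 (V := V) (J ^ (p + q)))
    ?_ ?_ ?_ ?_ hv
  · rintro x ⟨b, hb, v', rfl⟩
    rw [← mul_smul]
    exact Ksmul15 (KmulK15 hJ2 p q a ha b (pow_le_K15 J q hb)) v'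
  · simp only [smul_zero]; exact Submodule.zero_mem _
  · intro x y _ _ hx hy
    simp only [smul_add]; exact Submodule.add_mem _ hx hy
  · intro r x _ hx
    simp only [hsmul_comm15]; exact Submodule.smul_mem _ r hx

end ModuleV

/-- The map `(b ⊗ c) ⊗ d ↦ (b * h * d) ⊗ c`. -/
def mu15 (h : G) :
    ((MonoidAlgebra k G ⊗[k] MonoidAlgebra k G) ⊗[k] MonoidAlgebra k G) →ₗ[k]
      (MonoidAlgebra k G ⊗[k] MonoidAlgebra k G) :=
  TensorProduct.map
      ((LinearMap.mul' k (MonoidAlgebra k G)) ∘ₗ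
        TensorProduct.map (LinearMap.mulRight k (MonoidAlgebra.of k G h)) LinearMap.id)
      LinearMap.id
    ∘ₗ (TensorProduct.assoc k _ _ _).symm.toLinearMap
    ∘ₗ TensorProduct.map LinearMap.id (TensorProduct.comm k _ _).toLinearMap
    ∘ₗ (TensorProduct.assoc k _ _ _).toLinearMap

@[simp] theorem mu15_tmul (h : G) (b c d : MonoidAlgebra k G) :
    mu15 h ((b ⊗ₜ[k] c) ⊗ₜ[k] d) = (b * MonoidAlgebra.of k G h * d) ⊗ₜ[k] c := by
  simp [mu15, mul_assoc]

include hJ2 in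
theorem core15
    (Δ : MonoidAlgebra k G →ₗ[k] MonoidAlgebra k G ⊗[k] MonoidAlgebra k G)
    (hΔ : ∀ g : G, Δ (MonoidAlgebra.of k G g) =
      MonoidAlgebra.of k G g ⊗ₜ[k] MonoidAlgebra.of k G g)
    (S : MonoidAlgebra k G →ₗ[k] MonoidAlgebra k G)
    (hS : ∀ g : G, S (MonoidAlgebra.of k G g) = MonoidAlgebra.of k G g⁻¹)
    (hJΔ : ∀ x ∈ J, Δ x ∈ subTensor15 J ⊤ ⊔ subTensor15 ⊤ J)
    (hJS : ∀ x ∈ J, S x ∈ J)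
    {V : Type*} [AddCommGroup V] [Module k V] [Module (MonoidAlgebra k G) V]
    [IsScalarTower k (MonoidAlgebra k G) V]
    (Vx : G → Submodule k V)
    (hcompat : ∀ g x : G, ∀ v ∈ Vx x, MonoidAlgebra.of k G g • v ∈ Vx (g * x * g⁻¹))
    (c : V ⊗[k] V →ₗ[k] V ⊗[k] V)
    (hc : ∀ g : G, ∀ u ∈ Vx g, ∀ v : V,
      c (u ⊗ₜ[k] v) = (MonoidAlgebra.of k G g • v) ⊗ₜ[k] u)
    (i j : ℕ) {x : MonoidAlgebra k G} (hx : x ∈ J ^ i) (h : G) {w : V} (hw : w ∈ Vx h)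
    {v : V} (hv : v ∈ subSMul15 (V := V) (J ^ j)) :
    c ((x • w) ⊗ₜ[k] v) ∈ ⨆ (kl : ℕ × ℕ) (_ : i + j ≤ kl.1 + kl.2),
      subTensor15 (subSMul15 (V := V) (J ^ kl.1)) (subSMul15 (V := V) (J ^ kl.2)) := by
  have key : ∀ y : MonoidAlgebra k G,
      TensorProduct.map (smulBy15 v) (smulBy15 w)
        (mu15 h (TensorProduct.map LinearMap.id S
          (TensorProduct.map Δ LinearMap.id (Δ y)))) = c ((y • w) ⊗ₜ[k] v) := by
    intro y
    induction y using MonoidAlgebra.induction_on with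
    | of g =>
      simp only [hΔ, TensorProduct.map_tmul, LinearMap.id_apply, hS, mu15_tmul, smulBy15_apply]
      rw [hc (g * h * g⁻¹) (MonoidAlgebra.of k G g • w) (hcompat g h w hw) v,
        ← map_mul, ← map_mul]
    | add f f' hf hf' =>
      simp only [map_add, add_smul, TensorProduct.add_tmul] at hf hf' ⊢
      rw [hf, hf']
    | smul r f hf =>
      rw [smul_assoc, ← TensorProduct.smul_tmul', c.map_smul, ← hf,
        Δ.map_smul, (TensorProduct.map Δ LinearMap.id).map_smul,
        (TensorProduct.map LinearMap.id S).map_smul, (mu15 h).map_smul,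
        (TensorProduct.map (smulBy15 v) (smulBy15 w)).map_smul]
  have hxK : x ∈ Kpow15 J i := pow_le_K15 J i hx
  have t1 : Δ x ∈ D15 J i := DmemD15 hJ2 Δ hΔ hJΔ i x hxK
  have t2 : TensorProduct.map Δ LinearMap.id (Δ x) ∈ D3_15 J i := by
    refine Submodule.iSup_induction _
      (motive := fun t => TensorProduct.map Δ LinearMap.id t ∈ D3_15 J i) t1
      (fun pq t ht => ?_)
      (by simp only [LinearMap.map_zero]; exact Submodule.zero_mem _)
      (fun a b ha hb => by simp only [LinearMap.map_add]; exact Submodule.add_mem _ ha hb)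
    obtain ⟨⟨p, q⟩, hpq⟩ := pq
    refine st_ind15 _ ht (fun u hu z hz => ?_)
    rw [TensorProduct.map_tmul]
    have hu' : Δ u ∈ D15 J p := DmemD15 hJ2 Δ hΔ hJΔ p u hu
    refine Submodule.iSup_induction _
      (motive := fun s => s ⊗ₜ[k] (LinearMap.id z) ∈ D3_15 J i) hu'
      (fun ab s hs => ?_)
      (by simp only [TensorProduct.zero_tmul]; exact Submodule.zero_mem _)
      (fun a b ha hb => by simp only [TensorProduct.add_tmul]; exact Submodule.add_mem _ ha hb)
    obtain ⟨⟨a1, a2⟩, hab⟩ := ab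
    exact memD3_15 a1 a2 q (by simp at hpq hab; omega) (tmul_mem15 hs hz)
  have t3 : TensorProduct.map LinearMap.id S
      (TensorProduct.map Δ LinearMap.id (Δ x)) ∈ D3_15 J i := by
    refine Submodule.iSup_induction _
      (motive := fun t => TensorProduct.map LinearMap.id S t ∈ D3_15 J i) t2
      (fun abe t ht => ?_)
      (by simp only [LinearMap.map_zero]; exact Submodule.zero_mem _)
      (fun a b ha hb => by simp only [LinearMap.map_add]; exact Submodule.add_mem _ ha hb)
    obtain ⟨⟨⟨a, b⟩, e⟩, habe⟩ := abe
    refine st_ind15 _ ht (fun s hs z hz => ?_)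
    rw [TensorProduct.map_tmul]
    exact memD3_15 a b e (by simpa using habe)
      (tmul_mem15 hs (SmemK15 S hS hJS e z hz))
  have t4 : mu15 h (TensorProduct.map LinearMap.id S
      (TensorProduct.map Δ LinearMap.id (Δ x))) ∈ D15 J i := by
    refine Submodule.iSup_induction _
      (motive := fun t => mu15 h t ∈ D15 J i) t3
      (fun abe t ht => ?_)
      (by simp only [LinearMap.map_zero]; exact Submodule.zero_mem _)
      (fun a b ha hb => by simp only [LinearMap.map_add]; exact Submodule.add_mem _ ha hb)
    obtain ⟨⟨⟨a, b⟩, e⟩, habe⟩ := abe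
    simp only at habe
    refine st_ind15 _ ht (fun s hs d hd => ?_)
    have main : ((mu15 h) ∘ₗ ((TensorProduct.mk k
        (MonoidAlgebra k G ⊗[k] MonoidAlgebra k G) (MonoidAlgebra k G)).flip d)) s
        ∈ D15 J i := by
      refine st_ind15 _ hs (fun u hu z hz => ?_)
      simp only [LinearMap.comp_apply, LinearMap.flip_apply, TensorProduct.mk_apply, mu15_tmul]
      refine memD15 (a + e) b (by omega) (tmul_mem15 ?_ hz)
      have h1 : u * MonoidAlgebra.of k G h ∈ Kpow15 J a := by
        simpa using KmulK15 hJ2 a 0 u hu (MonoidAlgebra.of k G h) Submodule.mem_top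
      exact KmulK15 hJ2 a e _ h1 d hd
    simpa using main
  rw [← key x]
  refine Submodule.iSup_induction _
    (motive := fun t => TensorProduct.map (smulBy15 v) (smulBy15 w) t ∈
      ⨆ (kl : ℕ × ℕ) (_ : i + j ≤ kl.1 + kl.2),
        subTensor15 (subSMul15 (V := V) (J ^ kl.1)) (subSMul15 (V := V) (J ^ kl.2))) t4
    (fun pq t ht => ?_)
    (by simp only [LinearMap.map_zero]; exact Submodule.zero_mem _)
    (fun a b ha hb => by simp only [LinearMap.map_add]; exact Submodule.add_mem _ ha hb)
  obtain ⟨⟨p, q⟩, hpq⟩ := pq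
  simp only at hpq
  refine st_ind15 _ ht (fun b hb d hd => ?_)
  rw [TensorProduct.map_tmul]
  refine Submodule.mem_iSup_of_mem (p + j, q) (Submodule.mem_iSup_of_mem (by omega) ?_)
  exact tmul_mem15 (smulF15 hJ2 hb hv) (Ksmul15 hd w)

end Aux15

/-- Let `k` be a field, `G` a group, `J ⊆ kG` a nilpotent Hopf ideal of the group
algebra, and `V` a Yetter–Drinfeld module over `kG` with braiding `c`. Then `(J^iV)_{i≥0}` is a
decreasing filtration of the braided vector space `(V, c)`: `J^0V = V`, `J^iV ⊇ J^jV` for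
`i ≤ j`, `∩ J^iV = 0`, and `c(J^iV ⊗ J^jV) ⊆ Σ_{k+l ≥ i+j} J^kV ⊗ J^lV`. -/
theorem stmt15 {k : Type*} [Field k] {G : Type*} [Group G] [DecidableEq G]
    -- the structure maps of the Hopf algebra kG
    (Δ : MonoidAlgebra k G →ₗ[k] MonoidAlgebra k G ⊗[k] MonoidAlgebra k G)
    (hΔ : ∀ g : G, Δ (MonoidAlgebra.of k G g) =
      MonoidAlgebra.of k G g ⊗ₜ[k] MonoidAlgebra.of k G g)
    (ε : MonoidAlgebra k G →ₗ[k] k)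
    (hε : ∀ g : G, ε (MonoidAlgebra.of k G g) = 1)
    (S : MonoidAlgebra k G →ₗ[k] MonoidAlgebra k G)
    (hS : ∀ g : G, S (MonoidAlgebra.of k G g) = MonoidAlgebra.of k G g⁻¹)
    -- J is a nilpotent Hopf ideal of kG
    (J : Submodule k (MonoidAlgebra k G))
    (hJ2 : ∀ x ∈ J, ∀ a : MonoidAlgebra k G, a * x ∈ J ∧ x * a ∈ J)
    (hJΔ : ∀ x ∈ J, Δ x ∈ subTensor15 J ⊤ ⊔ subTensor15 ⊤ J)
    (hJε : ∀ x ∈ J, ε x = 0)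
    (hJS : ∀ x ∈ J, S x ∈ J)
    (hJnil : ∃ n : ℕ, 1 ≤ n ∧ J ^ n = ⊥)
    -- V is a Yetter--Drinfeld module over kG with braiding c
    {V : Type*} [AddCommGroup V] [Module k V] [Module (MonoidAlgebra k G) V]
    [IsScalarTower k (MonoidAlgebra k G) V]
    (Vx : G → Submodule k V)
    (hgrad : DirectSum.IsInternal Vx)
    (hcompat : ∀ g x : G, ∀ v ∈ Vx x, MonoidAlgebra.of k G g • v ∈ Vx (g * x * g⁻¹))
    (c : V ⊗[k] V →ₗ[k] V ⊗[k] V)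
    (hc : ∀ g : G, ∀ u ∈ Vx g, ∀ v : V,
      c (u ⊗ₜ[k] v) = (MonoidAlgebra.of k G g • v) ⊗ₜ[k] u) :
    subSMul15 (V := V) (J ^ 0) = ⊤ ∧
    (Antitone fun i : ℕ => subSMul15 (V := V) (J ^ i)) ∧
    (⨅ i : ℕ, subSMul15 (V := V) (J ^ i)) = ⊥ ∧
    (∀ i j : ℕ,
      Submodule.map c
          (subTensor15 (subSMul15 (V := V) (J ^ i)) (subSMul15 (V := V) (J ^ j))) ≤
        ⨆ (kl : ℕ × ℕ) (_ : i + j ≤ kl.1 + kl.2),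
          subTensor15 (subSMul15 (V := V) (J ^ kl.1)) (subSMul15 (V := V) (J ^ kl.2))) := by
  obtain ⟨n, hn1, hn⟩ := hJnil
  refine ⟨F0top15, ?_, ?_, ?_⟩
  · -- antitone
    intro i j hij
    simp only
    refine Submodule.span_le.mpr ?_
    rintro w ⟨a, ha, v', rfl⟩
    have ha' : a ∈ J ^ i * J ^ (j - i) := by
      rw [← pow_add, Nat.add_sub_cancel' hij]; exact ha
    refine Submodule.mul_induction_on (C := fun a => a • v' ∈ subSMul15 (V := V) (J ^ i)) ha'
      (fun y hy z hz => ?_) (fun u t hu ht => ?_)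
    · simp only [mul_smul]
      exact Submodule.subset_span ⟨y, hy, z • v', rfl⟩
    · simp only [add_smul]
      exact Submodule.add_mem _ hu ht
  · -- intersection is zero
    rw [eq_bot_iff]
    refine le_trans (iInf_le _ n) ?_
    rw [hn]
    refine Submodule.span_le.mpr ?_
    rintro w ⟨a, ha, v', rfl⟩
    rw [Submodule.mem_bot] at ha
    rw [ha, zero_smul]
    exact Submodule.zero_mem ⊥
  · -- braiding compatibility
    intro i j t ht
    obtain ⟨s, hs, rfl⟩ := ht
    refine st_ind15 c hs (fun u hu v hv => ?_)
    refine Submodule.span_induction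
      (p := fun u _ => c (u ⊗ₜ[k] v) ∈ ⨆ (kl : ℕ × ℕ) (_ : i + j ≤ kl.1 + kl.2),
        subTensor15 (subSMul15 (V := V) (J ^ kl.1)) (subSMul15 (V := V) (J ^ kl.2)))
      ?_ ?_ ?_ ?_ hu
    · rintro u ⟨a, ha, u', rfl⟩
      have hu' : u' ∈ ⨆ g, Vx g := by rw [hgrad.submodule_iSup_eq_top]; trivial
      refine Submodule.iSup_induction Vx
        (motive := fun u' => c ((a • u') ⊗ₜ[k] v) ∈ ⨆ (kl : ℕ × ℕ) (_ : i + j ≤ kl.1 + kl.2),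
          subTensor15 (subSMul15 (V := V) (J ^ kl.1)) (subSMul15 (V := V) (J ^ kl.2)))
        hu' (fun g w hw => ?_) ?_ ?_
      · exact core15 hJ2 Δ hΔ S hS hJΔ hJS Vx hcompat c hc i j ha g hw hv
      · simp only [smul_zero, TensorProduct.zero_tmul, LinearMap.map_zero]
        exact Submodule.zero_mem _
      · intro y z hy hz
        simp only [smul_add, TensorProduct.add_tmul, LinearMap.map_add]
        exact Submodule.add_mem _ hy hz
    · simp only [TensorProduct.zero_tmul, LinearMap.map_zero]
      exact Submodule.zero_mem _
    · intro y z _ _ hy hz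
      simp only [TensorProduct.add_tmul, LinearMap.map_add]
      exact Submodule.add_mem _ hy hz
    · intro r y _ hy
      simp only [← TensorProduct.smul_tmul', LinearMap.map_smul]
      exact Submodule.smul_mem _ r hy
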